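/- Let G and H be finite graphs, each of which is a general corona of a tree, say G = T₁∘𝒫₁ and H = T₂∘𝒫₂ for trees T₁, T₂ and vertex neighborhood partitions 𝒫₁, 𝒫₂. If G and H share exactly one edge (and exactly its two endpoints), and exactly one endpoint of this edge is an external vertex in each of G and H, then the union G ∪ H is a general corona of a tree. -/

import Mathlib

set_option linter.unusedSectionVars false
set_option maxHeartbeats 1000000


open SimpleGraph

namespace GenCorona

universe u

/-- A vertex neighborhood partition of a graph `G`: for every vertex `v`, a partition
of the open neighborhood `N_G(v)` into nonempty sets. -/
structure NbhdPartition {V : Type u} (G : SimpleGraph V) where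
  part : V → Set (Set V)
  nonempty : ∀ v : V, ∀ A ∈ part v, A.Nonempty
  subset_nbhd : ∀ v : V, ∀ A ∈ part v, A ⊆ G.neighborSet v
  covers : ∀ v : V, ∀ u ∈ G.neighborSet v, ∃ A ∈ part v, u ∈ A
  eq_of_inter : ∀ v : V, ∀ A ∈ part v, ∀ B ∈ part v, (A ∩ B).Nonempty → A = B

variable {V : Type u}

/-- The vertex type of the general corona `G ∘ 𝒫`: external vertices `(v,1)` are encoded
as `Sum.inl v`, internal vertices `(v,A)` (with `A ∈ 𝒫(v)`) as `Sum.inr ⟨(v,A), _⟩`. -/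
abbrev CoronaVert (G : SimpleGraph V) (P : NbhdPartition G) : Type u :=
  V ⊕ {p : V × Set V // p.2 ∈ P.part p.1}

/-- The general corona `G ∘ 𝒫`. -/
def corona (G : SimpleGraph V) (P : NbhdPartition G) : SimpleGraph (CoronaVert G P) :=
  SimpleGraph.fromRel fun x y =>
    match x, y with
    | Sum.inl v, Sum.inr p => v = p.val.1
    | Sum.inr p, Sum.inr q =>
        G.Adj p.val.1 q.val.1 ∧ q.val.1 ∈ p.val.2 ∧ p.val.1 ∈ q.val.2
    | _, _ => False

/-- The set of external vertices of the general corona. -/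
def Ext (G : SimpleGraph V) (P : NbhdPartition G) : Set (CoronaVert G P) :=
  Set.range Sum.inl

/-- A graph is a general corona of a tree if it is isomorphic to `T ∘ 𝒫` for some finite
tree `T` and some vertex neighborhood partition `𝒫` of `T`. -/
def IsGeneralCoronaOfTree {W : Type*} (H : SimpleGraph W) : Prop :=
  ∃ (n : ℕ) (T : SimpleGraph (Fin n)) (P : NbhdPartition T),
    T.IsTree ∧ Nonempty (H ≃g corona T P)

/-- A graph `H` is a general corona of a tree with external vertex set `E`. -/
def IsGenCoronaWithExt {W : Type*} (H : SimpleGraph W) (E : Set W) : Prop :=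
  ∃ (n : ℕ) (T : SimpleGraph (Fin n)) (P : NbhdPartition T),
    T.IsTree ∧ ∃ f : H ≃g corona T P, E = ⇑f ⁻¹' Ext T P

/-- `D` is a dominating set of `G`. -/
def IsDominating (G : SimpleGraph V) (D : Set V) : Prop :=
  ∀ v ∉ D, ∃ u ∈ D, G.Adj v u

/-- `S` is a 2-packing of `G`: any two distinct vertices of `S` are at distance
greater than 2 (where the extended distance of unreachable vertices is `⊤`). -/
def Is2Packing (G : SimpleGraph V) (S : Set V) : Prop :=
  ∀ u ∈ S, ∀ v ∈ S, u ≠ v → 2 < G.edist u v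

/-- A leaf is a vertex of degree 1, i.e. with exactly one neighbor. -/
def IsLeaf (G : SimpleGraph V) (v : V) : Prop :=
  (G.neighborSet v).ncard = 1

/-- The domination number: the minimum size of a dominating set. -/
noncomputable def dominationNumber (G : SimpleGraph V) : ℕ :=
  sInf {n : ℕ | ∃ D : Set V, IsDominating G D ∧ D.ncard = n}

/-- The graph obtained from `G` by subdividing every edge in `F` (each once):
for each `e ∈ F` a new vertex `Sum.inr e` replaces the edge `e` by a path of length two. -/
def subdivide (G : SimpleGraph V) (F : Set (Sym2 V)) : SimpleGraph (V ⊕ F) :=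
  SimpleGraph.fromRel fun x y =>
    match x, y with
    | Sum.inl u, Sum.inl v => G.Adj u v ∧ s(u, v) ∉ F
    | Sum.inl u, Sum.inr e => u ∈ e.val
    | _, _ => False

/-- The domination subdivision number `sd(G)`: the minimum number of edges which must be
subdivided (each edge at most once) in order to increase the domination number. -/
noncomputable def sd (G : SimpleGraph V) : ℕ :=
  sInf {k : ℕ | ∃ F : Set (Sym2 V), F ⊆ G.edgeSet ∧ F.ncard = k ∧
    dominationNumber G < dominationNumber (subdivide G F)}

/-- The corona `G ∘ K₁`: attach one new pendant vertex `Sum.inr v` to each vertex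
`Sum.inl v` of `G`. -/
def coronaK1 (G : SimpleGraph V) : SimpleGraph (V ⊕ V) :=
  SimpleGraph.fromRel fun x y =>
    match x, y with
    | Sum.inl u, Sum.inl w => G.Adj u w
    | Sum.inl u, Sum.inr w => u = w
    | _, _ => False

/-- The 2-subdivision `S₂(G)`: every edge `uv` is replaced by a path `(u, x₁, x₂, v)`;
the new vertex `Sum.inr ⟨(u,v), _⟩` is the subdivision vertex adjacent to `u`. -/
def twoSubdivision (G : SimpleGraph V) : SimpleGraph (V ⊕ {p : V × V // G.Adj p.1 p.2}) :=
  SimpleGraph.fromRel fun x y =>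
    match x, y with
    | Sum.inl u, Sum.inr p => u = p.val.1
    | Sum.inr p, Sum.inr q => p.val.1 = q.val.2 ∧ p.val.2 = q.val.1
    | _, _ => False

/-- `𝒫'` is a refinement of `𝒫`. -/
def Refines {G : SimpleGraph V} (P' P : NbhdPartition G) : Prop :=
  ∀ v : V, ∀ A ∈ P'.part v, ∃ B ∈ P.part v, A ⊆ B

/-- The graph obtained by contracting the two vertices `x` and `y` of `G` to the single
vertex `x` (the vertex `y` is removed, and `x` becomes adjacent to all former
neighbors of `y`). -/
def contractPair {W : Type*} (G : SimpleGraph W) (x y : W) :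
    SimpleGraph {w : W // w ≠ y} :=
  SimpleGraph.fromRel fun a b =>
    G.Adj a.val b.val ∨ (a.val = x ∧ G.Adj y b.val) ∨ (b.val = x ∧ G.Adj a.val y)

/-- The graph obtained from `G` by attaching a path `(x, y, z)` (encoded as
`Sum.inr 0, Sum.inr 1, Sum.inr 2`) to the vertex `v` via the edge `v x`. -/
def attachPath3 {W : Type*} (G : SimpleGraph W) (v : W) : SimpleGraph (W ⊕ Fin 3) :=
  SimpleGraph.fromRel fun a b =>
    match a, b with
    | Sum.inl u, Sum.inl w => G.Adj u w
    | Sum.inl u, Sum.inr i => u = v ∧ i = 0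
    | Sum.inr i, Sum.inr j => (i = 0 ∧ j = 1) ∨ (i = 1 ∧ j = 2)
    | _, _ => False

/-- The graph obtained from `G` by attaching a path `(x, y)` (encoded as
`Sum.inr 0, Sum.inr 1`) to the vertex `v` via the edge `v x`. -/
def attachPath2 {W : Type*} (G : SimpleGraph W) (v : W) : SimpleGraph (W ⊕ Fin 2) :=
  SimpleGraph.fromRel fun a b =>
    match a, b with
    | Sum.inl u, Sum.inl w => G.Adj u w
    | Sum.inl u, Sum.inr i => u = v ∧ i = 0
    | Sum.inr i, Sum.inr j => i = 0 ∧ j = 1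
    | _, _ => False

/-- The family `𝓕` of labeled trees; the label of a vertex is `A` when it belongs to the
distinguished set `L`, and `B` otherwise.  The family contains the labeled path `P₄`
(leaves labeled `A`, support vertices labeled `B`) and is closed under the two
attachment operations. -/
inductive LabF : ∀ {W : Type}, SimpleGraph W → Set W → Prop where
  | base : LabF (SimpleGraph.pathGraph 4) ({0, 3} : Set (Fin 4))
  | opA {W : Type} {G : SimpleGraph W} {L : Set W} (v : W) :
      LabF G L → v ∈ L →
        LabF (attachPath3 G v) (Sum.inl '' L ∪ {Sum.inr (2 : Fin 3)})
  | opB {W : Type} {G : SimpleGraph W} {L : Set W} (v : W) :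
      LabF G L → v ∉ L →
        LabF (attachPath2 G v) (Sum.inl '' L ∪ {Sum.inr (1 : Fin 2)})

/-- A tree `T` belongs to the family `𝓕` if it admits a labeling constructed by the
above rules, i.e. it is isomorphic to a member of the inductively generated family. -/
def MemF {W : Type*} (T : SimpleGraph W) : Prop :=
  ∃ (W' : Type) (G : SimpleGraph W') (L : Set W'), LabF G L ∧ Nonempty (T ≃g G)

-- adjacency lemmas
variable {G : SimpleGraph V} {P : NbhdPartition G}

@[simp] lemma corona_adj_inl_inl {v w : V} :
    ¬ (corona G P).Adj (Sum.inl v) (Sum.inl w) := by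
  rw [corona, fromRel_adj]
  rintro ⟨-, h | h⟩ <;> exact h

@[simp] lemma corona_adj_inl_inr {v : V} {p} :
    (corona G P).Adj (Sum.inl v) (Sum.inr p) ↔ v = p.val.1 := by
  rw [corona, fromRel_adj]
  constructor
  · rintro ⟨-, h | h⟩
    · exact h
    · exact h.elim
  · intro h
    exact ⟨by simp, Or.inl h⟩

@[simp] lemma corona_adj_inr_inl {v : V} {p} :
    (corona G P).Adj (Sum.inr p) (Sum.inl v) ↔ v = p.val.1 := by
  rw [adj_comm, corona_adj_inl_inr]

@[simp] lemma corona_adj_inr_inr {p q} :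
    (corona G P).Adj (Sum.inr p : CoronaVert G P) (Sum.inr q) ↔
      G.Adj p.val.1 q.val.1 ∧ q.val.1 ∈ p.val.2 ∧ p.val.1 ∈ q.val.2 := by
  rw [corona, fromRel_adj]
  constructor
  · rintro ⟨-, h | h⟩
    · exact h
    · exact ⟨h.1.symm, h.2.2, h.2.1⟩
  · intro h
    refine ⟨?_, Or.inl h⟩
    intro hpq
    have : p = q := by simpa using hpq
    subst this
    exact h.1.ne rfl


section Transport
variable {V' : Type u} {G : SimpleGraph V} {G' : SimpleGraph V'}

/-- Transport a neighborhood partition along a graph isomorphism. -/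
def NbhdPartition.transport (φ : G ≃g G') (P : NbhdPartition G) : NbhdPartition G' where
  part v' := (Set.image φ) '' P.part (φ.symm v')
  nonempty v' A hA := by
    obtain ⟨B, hB, rfl⟩ := hA
    exact (P.nonempty _ B hB).image _
  subset_nbhd v' A hA := by
    obtain ⟨B, hB, rfl⟩ := hA
    rintro _ ⟨u, hu, rfl⟩
    have h1 : G.Adj (φ.symm v') u := P.subset_nbhd _ B hB hu
    have h2 : G'.Adj (φ (φ.symm v')) (φ u) := φ.map_rel_iff.mpr h1
    rwa [φ.apply_symm_apply] at h2
  covers v' u hu := by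
    have h1 : G.Adj (φ.symm v') (φ.symm u) := by
      rw [← φ.map_rel_iff, φ.apply_symm_apply, φ.apply_symm_apply]
      exact hu
    obtain ⟨A, hA, hmem⟩ := P.covers _ _ h1
    exact ⟨φ '' A, ⟨A, hA, rfl⟩, ⟨φ.symm u, hmem, φ.apply_symm_apply u⟩⟩
  eq_of_inter v' A hA B hB hAB := by
    obtain ⟨A0, hA0, rfl⟩ := hA
    obtain ⟨B0, hB0, rfl⟩ := hB
    obtain ⟨x, ⟨a, ha, rfl⟩, ⟨b, hb, hba⟩⟩ := hAB
    have : a = b := φ.toEquiv.injective hba.symm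
    subst this
    rw [P.eq_of_inter _ A0 hA0 B0 hB0 ⟨a, ha, hb⟩]

lemma transport_mem (φ : G ≃g G') (P : NbhdPartition G) {x : V} {A : Set V}
    (h : A ∈ P.part x) : (⇑φ) '' A ∈ (P.transport φ).part (φ x) :=
  ⟨A, by rwa [RelIso.symm_apply_apply], rfl⟩

lemma transport_mem_symm (φ : G ≃g G') (P : NbhdPartition G) {x' : V'} {A' : Set V'}
    (h : A' ∈ (P.transport φ).part x') : (⇑φ.symm) '' A' ∈ P.part (φ.symm x') := by
  obtain ⟨B, hB, rfl⟩ := h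
  have : (⇑φ.symm) '' ((⇑φ) '' B) = B := by
    rw [← Set.image_comp]
    simp [Set.image_congr' (fun a => φ.toEquiv.symm_apply_apply a)]
  rwa [this]

/-- The corona construction is functorial in graph isomorphisms. -/
noncomputable def coronaTransportIso (φ : G ≃g G') (P : NbhdPartition G) :
    corona G P ≃g corona G' (P.transport φ) where
  toFun := Sum.map φ (fun p => ⟨(φ p.val.1, (⇑φ) '' p.val.2), transport_mem φ P p.2⟩)
  invFun := Sum.map φ.symm (fun p => ⟨(φ.symm p.val.1, (⇑φ.symm) '' p.val.2),
    transport_mem_symm φ P p.2⟩)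
  left_inv := by
    rintro (v | ⟨⟨x, A⟩, h⟩)
    · simp
    · simp only [Sum.map_inr, Sum.inr.injEq]
      refine Subtype.ext (Prod.ext ?_ ?_) <;> simp only
      · exact φ.toEquiv.symm_apply_apply x
      · rw [← Set.image_comp]
        simp [Set.image_congr' (fun a => φ.toEquiv.symm_apply_apply a)]
  right_inv := by
    rintro (v | ⟨⟨x, A⟩, h⟩)
    · simp
    · simp only [Sum.map_inr, Sum.inr.injEq]
      refine Subtype.ext (Prod.ext ?_ ?_) <;> simp only
      · exact φ.toEquiv.apply_symm_apply x
      · rw [← Set.image_comp]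
        simp [Set.image_congr' (fun a => φ.toEquiv.apply_symm_apply a)]
  map_rel_iff' := by
    rintro (v | ⟨⟨x, A⟩, hx⟩) (w | ⟨⟨y, B⟩, hy⟩) <;>
      simp only [Equiv.coe_fn_mk, Sum.map_inl, Sum.map_inr]
    · constructor <;> (intro h; exact absurd h (by
        rw [corona, fromRel_adj]; rintro ⟨-, h | h⟩ <;> exact h))
    · rw [corona_adj_inl_inr, corona_adj_inl_inr]
      exact φ.toEquiv.apply_eq_iff_eq.trans Iff.rfl
    · rw [corona_adj_inr_inl, corona_adj_inr_inl]
      exact φ.toEquiv.apply_eq_iff_eq.trans Iff.rfl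
    · rw [corona_adj_inr_inr, corona_adj_inr_inr]
      simp only [φ.map_rel_iff, Function.Injective.mem_set_image φ.injective]
end Transport

section Glue
variable {V₁ V₂ : Type} [DecidableEq V₁] [DecidableEq V₂]

abbrev GlueV (V₁ V₂ : Type) (v₂ : V₂) : Type := V₁ ⊕ {y : V₂ // y ≠ v₂}

variable (v₁ : V₁) (v₂ : V₂)

/-- The inclusion of the second tree into the glued vertex set. -/
def gi2 (x : V₂) : GlueV V₁ V₂ v₂ := if h : x = v₂ then Sum.inl v₁ else Sum.inr ⟨x, h⟩

lemma gi2_v2 : gi2 v₁ v₂ v₂ = Sum.inl v₁ := dif_pos rfl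

lemma gi2_of_ne {x} (h : x ≠ v₂) : gi2 v₁ v₂ x = Sum.inr ⟨x, h⟩ := dif_neg h

lemma gi2_injective : Function.Injective (gi2 v₁ v₂ : V₂ → _) := by
  intro a b h
  by_cases h1 : a = v₂ <;> by_cases h2 : b = v₂
  · exact h1.trans h2.symm
  · rw [h1, gi2_v2, gi2_of_ne _ _ h2] at h; exact absurd h (by simp)
  · rw [h2, gi2_v2, gi2_of_ne _ _ h1] at h; exact absurd h (by simp)
  · rw [gi2_of_ne _ _ h1, gi2_of_ne _ _ h2] at h
    exact congrArg Subtype.val (Sum.inr_injective h)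

lemma eq_of_gi2_eq_inl {x z} (h : gi2 v₁ v₂ x = Sum.inl z) : x = v₂ ∧ z = v₁ := by
  by_cases h1 : x = v₂
  · rw [h1, gi2_v2] at h
    exact ⟨h1, (Sum.inl_injective h).symm⟩
  · rw [gi2_of_ne _ _ h1] at h
    exact absurd h (by simp)

lemma eq_of_gi2_eq_inr {x} {z : {y : V₂ // y ≠ v₂}} (h : gi2 v₁ v₂ x = Sum.inr z) :
    x = z.val := by
  by_cases h1 : x = v₂
  · rw [h1, gi2_v2] at h
    exact absurd h (by simp)
  · rw [gi2_of_ne _ _ h1] at h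
    exact congrArg Subtype.val (Sum.inr_injective h)

variable (T₁ : SimpleGraph V₁) (T₂ : SimpleGraph V₂)

/-- The tree obtained by gluing `T₁` and `T₂` at the vertices `v₁ = v₂`. -/
def glueT : SimpleGraph (GlueV V₁ V₂ v₂) :=
  fromRel fun a b =>
    (∃ x y, T₁.Adj x y ∧ a = Sum.inl x ∧ b = Sum.inl y) ∨
    (∃ x y, T₂.Adj x y ∧ a = gi2 v₁ v₂ x ∧ b = gi2 v₁ v₂ y)

lemma glueT_adj {a b} : (glueT v₁ v₂ T₁ T₂).Adj a b ↔
    ((∃ x y, T₁.Adj x y ∧ a = Sum.inl x ∧ b = Sum.inl y) ∨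
     (∃ x y, T₂.Adj x y ∧ a = gi2 v₁ v₂ x ∧ b = gi2 v₁ v₂ y)) := by
  rw [glueT, fromRel_adj]
  constructor
  · rintro ⟨hne, (⟨x, y, hxy, ha, hb⟩ | ⟨x, y, hxy, ha, hb⟩) |
      (⟨x, y, hxy, hb, ha⟩ | ⟨x, y, hxy, hb, ha⟩)⟩
    · exact Or.inl ⟨x, y, hxy, ha, hb⟩
    · exact Or.inr ⟨x, y, hxy, ha, hb⟩
    · exact Or.inl ⟨y, x, hxy.symm, ha, hb⟩
    · exact Or.inr ⟨y, x, hxy.symm, ha, hb⟩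
  · rintro (⟨x, y, hxy, rfl, rfl⟩ | ⟨x, y, hxy, rfl, rfl⟩)
    · exact ⟨by simpa using hxy.ne, Or.inl (Or.inl ⟨x, y, hxy, rfl, rfl⟩)⟩
    · exact ⟨fun h => hxy.ne (gi2_injective v₁ v₂ h), Or.inl (Or.inr ⟨x, y, hxy, rfl, rfl⟩)⟩

lemma glueT_adj_inl {x y} (h : T₁.Adj x y) :
    (glueT v₁ v₂ T₁ T₂).Adj (Sum.inl x) (Sum.inl y) :=
  (glueT_adj v₁ v₂ T₁ T₂).mpr (Or.inl ⟨x, y, h, rfl, rfl⟩)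

lemma glueT_adj_gi2 {x y} (h : T₂.Adj x y) :
    (glueT v₁ v₂ T₁ T₂).Adj (gi2 v₁ v₂ x) (gi2 v₁ v₂ y) :=
  (glueT_adj v₁ v₂ T₁ T₂).mpr (Or.inr ⟨x, y, h, rfl, rfl⟩)

lemma not_mem_self_part {V : Type u} {G : SimpleGraph V} (P : NbhdPartition G) {v : V}
    {A : Set V} (hA : A ∈ P.part v) : v ∉ A :=
  fun h => G.irrefl (P.subset_nbhd v A hA h)

/-- The merged part at the glued vertex. -/
def mergedPart (A₁ : Set V₁) (A₂ : Set V₂) : Set (GlueV V₁ V₂ v₂) :=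
  Sum.inl '' A₁ ∪ gi2 v₁ v₂ '' A₂

lemma inl_not_mem_gi2_image {B : Set V₂} (hB : v₂ ∉ B) (z : V₁) :
    Sum.inl z ∉ gi2 v₁ v₂ '' B := by
  rintro ⟨b, hb, hbz⟩
  obtain ⟨rfl, -⟩ := eq_of_gi2_eq_inl v₁ v₂ hbz
  exact hB hb

variable {T₁ : SimpleGraph V₁} {T₂ : SimpleGraph V₂} {P₁ : NbhdPartition T₁}
  {P₂ : NbhdPartition T₂} {A₁ : Set V₁} {A₂ : Set V₂}

/-- The glued partition function. -/
def gluePartFun (P₁ : NbhdPartition T₁) (P₂ : NbhdPartition T₂) (A₁ : Set V₁) (A₂ : Set V₂) :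
    GlueV V₁ V₂ v₂ → Set (Set (GlueV V₁ V₂ v₂))
  | Sum.inl x =>
      if x = v₁ then
        (Set.image Sum.inl) '' (P₁.part v₁ \ {A₁}) ∪
          (Set.image (gi2 v₁ v₂)) '' (P₂.part v₂ \ {A₂}) ∪ {mergedPart v₁ v₂ A₁ A₂}
      else (Set.image (Sum.inl : V₁ → GlueV V₁ V₂ v₂)) '' (P₁.part x)
  | Sum.inr y => (Set.image (gi2 v₁ v₂)) '' (P₂.part y.val)

/-- The glued neighborhood partition. -/
def glueP (hA₁ : A₁ ∈ P₁.part v₁) (hA₂ : A₂ ∈ P₂.part v₂) :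
    NbhdPartition (glueT v₁ v₂ T₁ T₂) where
  part := gluePartFun v₁ v₂ P₁ P₂ A₁ A₂
  nonempty := by
    rintro (x | y) A hA
    · simp only [gluePartFun] at hA
      split_ifs at hA with hx
      · rcases hA with (⟨B, hB, rfl⟩ | ⟨B, hB, rfl⟩) | rfl
        · exact (P₁.nonempty _ B hB.1).image _
        · exact (P₂.nonempty _ B hB.1).image _
        · exact ((P₁.nonempty _ A₁ hA₁).image _).mono Set.subset_union_left
      · obtain ⟨B, hB, rfl⟩ := hA
        exact (P₁.nonempty _ B hB).image _
    · obtain ⟨B, hB, rfl⟩ := hA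
      exact (P₂.nonempty _ B hB).image _
  subset_nbhd := by
    have key1 : ∀ (x : V₁) (B : Set V₁), B ∈ P₁.part x →
        Sum.inl '' B ⊆ (glueT v₁ v₂ T₁ T₂).neighborSet (Sum.inl x) := by
      rintro x B hB _ ⟨b, hb, rfl⟩
      exact glueT_adj_inl v₁ v₂ T₁ T₂ (P₁.subset_nbhd _ B hB hb)
    have key2 : ∀ (y : V₂) (B : Set V₂), B ∈ P₂.part y →
        gi2 v₁ v₂ '' B ⊆ (glueT v₁ v₂ T₁ T₂).neighborSet (gi2 v₁ v₂ y) := by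
      rintro y B hB _ ⟨b, hb, rfl⟩
      exact glueT_adj_gi2 v₁ v₂ T₁ T₂ (P₂.subset_nbhd _ B hB hb)
    rintro (x | y) A hA
    · simp only [gluePartFun] at hA
      split_ifs at hA with hx
      · rw [hx]
        rcases hA with (⟨B, hB, rfl⟩ | ⟨B, hB, rfl⟩) | rfl
        · exact key1 _ B hB.1
        · have := key2 _ B hB.1
          rwa [gi2_v2] at this
        · refine Set.union_subset (key1 _ A₁ hA₁) ?_
          have := key2 _ A₂ hA₂
          rwa [gi2_v2] at this
      · obtain ⟨B, hB, rfl⟩ := hA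
        exact key1 _ B hB
    · obtain ⟨B, hB, rfl⟩ := hA
      have := key2 _ B hB
      rwa [gi2_of_ne _ _ y.prop, Subtype.coe_eta] at this
  covers := by
    intro a u hu
    rw [mem_neighborSet, glueT_adj] at hu
    rcases hu with ⟨x, y, hxy, rfl, rfl⟩ | ⟨x, y, hxy, hax, rfl⟩
    · obtain ⟨B, hB, hyB⟩ := P₁.covers x y hxy
      simp only [gluePartFun]
      split_ifs with hx
      · rw [hx] at hB
        by_cases hBA : B = A₁
        · rw [hBA] at hyB
          exact ⟨mergedPart v₁ v₂ A₁ A₂, Or.inr rfl, Or.inl ⟨y, hyB, rfl⟩⟩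
        · exact ⟨Sum.inl '' B, Or.inl (Or.inl ⟨B, ⟨hB, hBA⟩, rfl⟩), ⟨y, hyB, rfl⟩⟩
      · exact ⟨Sum.inl '' B, ⟨B, hB, rfl⟩, ⟨y, hyB, rfl⟩⟩
    · obtain ⟨B, hB, hyB⟩ := P₂.covers x y hxy
      by_cases hx : x = v₂
      · rw [hx] at hB
        rw [hx, gi2_v2] at hax
        subst hax
        simp only [gluePartFun, if_pos rfl]
        by_cases hBA : B = A₂
        · rw [hBA] at hyB
          exact ⟨mergedPart v₁ v₂ A₁ A₂, Or.inr rfl, Or.inr ⟨y, hyB, rfl⟩⟩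
        · exact ⟨gi2 v₁ v₂ '' B, Or.inl (Or.inr ⟨B, ⟨hB, hBA⟩, rfl⟩), ⟨y, hyB, rfl⟩⟩
      · rw [gi2_of_ne _ _ hx] at hax
        subst hax
        exact ⟨gi2 v₁ v₂ '' B, ⟨B, hB, rfl⟩, ⟨y, hyB, rfl⟩⟩
  eq_of_inter := by
    have inl_inj : Function.Injective (Sum.inl : V₁ → GlueV V₁ V₂ v₂) := Sum.inl_injective
    have gi2_inj := gi2_injective v₁ v₂
    have himl : ∀ {B C : Set V₁}, (Sum.inl '' B ∩ Sum.inl '' C : Set (GlueV V₁ V₂ v₂)).Nonempty →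
        (B ∩ C).Nonempty := by
      rintro B C ⟨c, ⟨b, hb, rfl⟩, ⟨b2, hb2, hbb⟩⟩
      exact ⟨b, hb, inl_inj hbb ▸ hb2⟩
    have himr : ∀ {B C : Set V₂}, (gi2 v₁ v₂ '' B ∩ gi2 v₁ v₂ '' C :
        Set (GlueV V₁ V₂ v₂)).Nonempty → (B ∩ C).Nonempty := by
      rintro B C ⟨c, ⟨b, hb, rfl⟩, ⟨b2, hb2, hbb⟩⟩
      exact ⟨b, hb, gi2_inj hbb ▸ hb2⟩
    have hmix : ∀ {B : Set V₁} {C : Set V₂}, v₂ ∉ C →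
        ¬ (Sum.inl '' B ∩ gi2 v₁ v₂ '' C : Set (GlueV V₁ V₂ v₂)).Nonempty := by
      rintro B C hC ⟨c, ⟨b, hb, rfl⟩, hc⟩
      exact inl_not_mem_gi2_image v₁ v₂ hC b hc
    have mcase1 : ∀ {B0 : Set V₁}, B0 ∈ P₁.part v₁ \ {A₁} →
        ¬ (Sum.inl '' B0 ∩ mergedPart v₁ v₂ A₁ A₂).Nonempty := by
      rintro B0 hB0 ⟨c, hc1, hc2 | hc2⟩
      · exact hB0.2 (P₁.eq_of_inter v₁ B0 hB0.1 A₁ hA₁ (himl ⟨c, hc1, hc2⟩))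
      · obtain ⟨b, -, rfl⟩ := hc1
        exact inl_not_mem_gi2_image v₁ v₂ (not_mem_self_part P₂ hA₂) b hc2
    have mcase2 : ∀ {B0 : Set V₂}, B0 ∈ P₂.part v₂ \ {A₂} →
        ¬ (gi2 v₁ v₂ '' B0 ∩ mergedPart v₁ v₂ A₁ A₂).Nonempty := by
      rintro B0 hB0 ⟨c, hc1, hc2 | hc2⟩
      · obtain ⟨z, -, rfl⟩ := hc2
        exact inl_not_mem_gi2_image v₁ v₂ (not_mem_self_part P₂ hB0.1) z hc1
      · exact hB0.2 (P₂.eq_of_inter v₂ B0 hB0.1 A₂ hA₂ (himr ⟨c, hc1, hc2⟩))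
    rintro (x | y) A hA B hB hAB
    · simp only [gluePartFun] at hA hB
      split_ifs at hA hB with hx
      · rcases hA with (⟨A0, hA0, rfl⟩ | ⟨A0, hA0, rfl⟩) | rfl <;>
          rcases hB with (⟨B0, hB0, rfl⟩ | ⟨B0, hB0, rfl⟩) | rfl
        · rw [P₁.eq_of_inter v₁ A0 hA0.1 B0 hB0.1 (himl hAB)]
        · exact absurd hAB (hmix (not_mem_self_part P₂ hB0.1))
        · exact absurd hAB (mcase1 hA0)
        · exact absurd hAB (fun h => hmix (not_mem_self_part P₂ hA0.1)
            (by rwa [Set.inter_comm] at h))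
        · rw [P₂.eq_of_inter v₂ A0 hA0.1 B0 hB0.1 (himr hAB)]
        · exact absurd hAB (mcase2 hA0)
        · exact absurd hAB (fun h => mcase1 hB0 (by rwa [Set.inter_comm] at h))
        · exact absurd hAB (fun h => mcase2 hB0 (by rwa [Set.inter_comm] at h))
        · rfl
      · obtain ⟨A0, hA0, rfl⟩ := hA
        obtain ⟨B0, hB0, rfl⟩ := hB
        rw [P₁.eq_of_inter x A0 hA0 B0 hB0 (himl hAB)]
    · obtain ⟨A0, hA0, rfl⟩ := hA
      obtain ⟨B0, hB0, rfl⟩ := hB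
      rw [P₂.eq_of_inter y.val A0 hA0 B0 hB0 (himr hAB)]

end Glue

section GlueTree
variable {V₁ V₂ : Type} [DecidableEq V₁] [DecidableEq V₂] (v₁ : V₁) (v₂ : V₂)
  (T₁ : SimpleGraph V₁) (T₂ : SimpleGraph V₂)

/-- Retraction onto the first factor. -/
def gr1 : GlueV V₁ V₂ v₂ → V₁ := Sum.elim id (fun _ => v₁)

/-- Retraction onto the second factor. -/
def gr2 : GlueV V₁ V₂ v₂ → V₂ := Sum.elim (fun _ => v₂) Subtype.val

@[simp] lemma gr1_inl (x : V₁) : gr1 v₁ v₂ (Sum.inl x) = x := rfl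

@[simp] lemma gr1_gi2 (z : V₂) : gr1 v₁ v₂ (gi2 v₁ v₂ z) = v₁ := by
  by_cases h : z = v₂
  · rw [h, gi2_v2]; rfl
  · rw [gi2_of_ne _ _ h]; rfl

@[simp] lemma gr2_gi2 (z : V₂) : gr2 (V₁ := V₁) v₂ (gi2 v₁ v₂ z) = z := by
  by_cases h : z = v₂
  · rw [h, gi2_v2]; rfl
  · rw [gi2_of_ne _ _ h]; rfl

@[simp] lemma gr2_inl (x : V₁) : gr2 (V₁ := V₁) v₂ (Sum.inl x : GlueV V₁ V₂ v₂) = v₂ := rfl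

lemma glue_proj1 {x₀ y₀ : V₁} {a b : GlueV V₁ V₂ v₂}
    (p : ((glueT v₁ v₂ T₁ T₂) \ fromEdgeSet {s(Sum.inl x₀, Sum.inl y₀)}).Walk a b) :
    (T₁ \ fromEdgeSet {s(x₀, y₀)}).Reachable (gr1 v₁ v₂ a) (gr1 v₁ v₂ b) := by
  induction p with
  | nil => exact Reachable.refl _
  | @cons a c b h p ih =>
    rw [sdiff_adj] at h
    obtain ⟨hadj, hne⟩ := h
    rw [fromEdgeSet_adj] at hne
    push_neg at hne
    have hne' := hne
    rcases (glueT_adj v₁ v₂ T₁ T₂).mp hadj with ⟨x, y, hxy, rfl, rfl⟩ | ⟨x, y, hxy, rfl, rfl⟩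
    · have hedge : s(x, y) ≠ s(x₀, y₀) := by
        intro hxx
        have : s((Sum.inl x : GlueV V₁ V₂ v₂), (Sum.inl y : GlueV V₁ V₂ v₂)) =
            s((Sum.inl x₀ : GlueV V₁ V₂ v₂), (Sum.inl y₀ : GlueV V₁ V₂ v₂)) := by
          have := congrArg (Sym2.map (Sum.inl : V₁ → GlueV V₁ V₂ v₂)) hxx
          simpa using this
        exact absurd (hne this) (by simpa using hxy.ne)
      have hadj1 : (T₁ \ fromEdgeSet {s(x₀, y₀)}).Adj x y := by
        rw [sdiff_adj, fromEdgeSet_adj]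
        exact ⟨hxy, by rintro ⟨h1, -⟩; exact hedge h1⟩
      simpa using hadj1.reachable.trans (by simpa using ih)
    · have h1 : gr1 v₁ v₂ (gi2 v₁ v₂ x) = gr1 v₁ v₂ (gi2 v₁ v₂ y) := by simp
      rw [h1]
      exact ih

lemma glue_proj2 {x₀ y₀ : V₂} {a b : GlueV V₁ V₂ v₂}
    (p : ((glueT v₁ v₂ T₁ T₂) \ fromEdgeSet {s(gi2 v₁ v₂ x₀, gi2 v₁ v₂ y₀)}).Walk a b) :
    (T₂ \ fromEdgeSet {s(x₀, y₀)}).Reachable (gr2 (V₁ := V₁) v₂ a) (gr2 (V₁ := V₁) v₂ b) := by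
  induction p with
  | nil => exact Reachable.refl _
  | @cons a c b h p ih =>
    rw [sdiff_adj] at h
    obtain ⟨hadj, hne⟩ := h
    rw [fromEdgeSet_adj] at hne
    push_neg at hne
    rcases (glueT_adj v₁ v₂ T₁ T₂).mp hadj with ⟨x, y, hxy, rfl, rfl⟩ | ⟨x, y, hxy, rfl, rfl⟩
    · have h1 : gr2 (V₁ := V₁) v₂ (Sum.inl x : GlueV V₁ V₂ v₂) =
          gr2 (V₁ := V₁) v₂ (Sum.inl y : GlueV V₁ V₂ v₂) := by simp
      rw [h1]
      exact ih
    · have hedge : s(x, y) ≠ s(x₀, y₀) := by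
        intro hxx
        have : s(gi2 v₁ v₂ x, gi2 v₁ v₂ y) = s(gi2 v₁ v₂ x₀, gi2 v₁ v₂ y₀) := by
          have := congrArg (Sym2.map (gi2 v₁ v₂)) hxx
          simpa using this
        exact absurd (hne this) (by push_neg; exact fun h => hxy.ne (gi2_injective v₁ v₂ h))
      have hadj2 : (T₂ \ fromEdgeSet {s(x₀, y₀)}).Adj x y := by
        rw [sdiff_adj, fromEdgeSet_adj]
        exact ⟨hxy, by rintro ⟨h1, -⟩; exact hedge h1⟩
      simpa using hadj2.reachable.trans (by simpa using ih)

lemma glueT_isTree (h1 : T₁.IsTree) (h2 : T₂.IsTree) : (glueT v₁ v₂ T₁ T₂).IsTree := by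
  have reach : ∀ a : GlueV V₁ V₂ v₂, (glueT v₁ v₂ T₁ T₂).Reachable a (Sum.inl v₁) := by
    rintro (x | y)
    · exact (h1.isConnected.preconnected x v₁).map
        ⟨Sum.inl, fun h => glueT_adj_inl v₁ v₂ T₁ T₂ h⟩
    · have := (h2.isConnected.preconnected y.val v₂).map
        (⟨gi2 v₁ v₂, fun h => glueT_adj_gi2 v₁ v₂ T₁ T₂ h⟩ : T₂ →g glueT v₁ v₂ T₁ T₂)
      have hco : ∀ z : V₂, (⟨gi2 v₁ v₂, fun h => glueT_adj_gi2 v₁ v₂ T₁ T₂ h⟩ :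
          T₂ →g glueT v₁ v₂ T₁ T₂) z = gi2 v₁ v₂ z := fun z => rfl
      rwa [hco, hco, gi2_of_ne _ _ y.prop, Subtype.coe_eta, gi2_v2] at this
  have hnon : Nonempty (GlueV V₁ V₂ v₂) := ⟨Sum.inl v₁⟩
  refine ⟨Connected.mk (fun a b => (reach a).trans (reach b).symm), ?_⟩
  · rw [isAcyclic_iff_forall_adj_isBridge]
    intro a b hab
    rcases (glueT_adj v₁ v₂ T₁ T₂).mp hab with ⟨x, y, hxy, rfl, rfl⟩ | ⟨x, y, hxy, rfl, rfl⟩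
    · rw [isBridge_iff]
      intro hr
      obtain ⟨p⟩ := hr
      have := glue_proj1 v₁ v₂ T₁ T₂ p
      simp only [gr1_inl] at this
      have hbr := isAcyclic_iff_forall_adj_isBridge.mp h1.IsAcyclic hxy
      rw [isBridge_iff] at hbr
      exact hbr this
    · rw [isBridge_iff]
      intro hr
      obtain ⟨p⟩ := hr
      have := glue_proj2 v₁ v₂ T₁ T₂ p
      simp only [gr2_gi2] at this
      have hbr := isAcyclic_iff_forall_adj_isBridge.mp h2.IsAcyclic hxy
      rw [isBridge_iff] at hbr
      exact hbr this

end GlueTree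

section Cmap
variable {V₁ V₂ : Type} [DecidableEq V₁] [DecidableEq V₂] (v₁ : V₁) (v₂ : V₂)
  {T₁ : SimpleGraph V₁} {T₂ : SimpleGraph V₂} {P₁ : NbhdPartition T₁} {P₂ : NbhdPartition T₂}
  (A₁ : Set V₁) (A₂ : Set V₂)

open Classical in
/-- The image of a part of `P₁` in the glued partition. -/
noncomputable def phi1 (x : V₁) (A : Set V₁) : Set (GlueV V₁ V₂ v₂) :=
  if x = v₁ ∧ A = A₁ then mergedPart v₁ v₂ A₁ A₂ else Sum.inl '' A

open Classical in
/-- The image of a part of `P₂` in the glued partition. -/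
noncomputable def phi2 (y : V₂) (B : Set V₂) : Set (GlueV V₁ V₂ v₂) :=
  if y = v₂ ∧ B = A₂ then mergedPart v₁ v₂ A₁ A₂ else gi2 v₁ v₂ '' B

lemma phi1_pos : phi1 v₁ v₂ A₁ A₂ v₁ A₁ = mergedPart v₁ v₂ A₁ A₂ := by simp [phi1]

lemma phi1_neg {x : V₁} {A : Set V₁} (h : ¬(x = v₁ ∧ A = A₁)) :
    phi1 v₁ v₂ A₁ A₂ x A = Sum.inl '' A := by
  rw [phi1, if_neg h]

lemma phi2_pos : phi2 v₁ v₂ A₁ A₂ v₂ A₂ = mergedPart v₁ v₂ A₁ A₂ := by simp [phi2]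

lemma phi2_neg {y : V₂} {B : Set V₂} (h : ¬(y = v₂ ∧ B = A₂)) :
    phi2 v₁ v₂ A₁ A₂ y B = gi2 v₁ v₂ '' B := by
  rw [phi2, if_neg h]

lemma phi1_mem {x : V₁} {A : Set V₁} (hA : A ∈ P₁.part x) :
    phi1 v₁ v₂ A₁ A₂ x A ∈ gluePartFun v₁ v₂ P₁ P₂ A₁ A₂ (Sum.inl x) := by
  by_cases h : x = v₁ ∧ A = A₁
  · obtain ⟨h1, h2⟩ := h
    rw [h1, h2, phi1_pos]
    simp only [gluePartFun, if_pos rfl]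
    exact Or.inr rfl
  · rw [phi1_neg _ _ _ _ h]
    simp only [gluePartFun]
    by_cases hx : x = v₁
    · rw [if_pos hx]
      rw [hx] at hA
      exact Or.inl (Or.inl ⟨A, ⟨hA, fun hAA => h ⟨hx, hAA⟩⟩, rfl⟩)
    · rw [if_neg hx]
      exact ⟨A, hA, rfl⟩

lemma phi2_mem {y : V₂} {B : Set V₂} (hB : B ∈ P₂.part y) :
    phi2 v₁ v₂ A₁ A₂ y B ∈ gluePartFun v₁ v₂ P₁ P₂ A₁ A₂ (gi2 v₁ v₂ y) := by
  by_cases h : y = v₂ ∧ B = A₂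
  · obtain ⟨h1, h2⟩ := h
    rw [h1, h2, phi2_pos, gi2_v2]
    simp only [gluePartFun, if_pos rfl]
    exact Or.inr rfl
  · rw [phi2_neg _ _ _ _ h]
    by_cases hy : y = v₂
    · rw [hy, gi2_v2]
      simp only [gluePartFun, if_pos rfl]
      rw [hy] at hB
      exact Or.inl (Or.inr ⟨B, ⟨hB, fun hBB => h ⟨hy, hBB⟩⟩, rfl⟩)
    · rw [gi2_of_ne _ _ hy]
      exact ⟨B, hB, rfl⟩

/-- The inclusion of the first corona into the glued corona. -/
noncomputable def cmap1 (hA₁ : A₁ ∈ P₁.part v₁) (hA₂ : A₂ ∈ P₂.part v₂) :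
    CoronaVert T₁ P₁ → CoronaVert (glueT v₁ v₂ T₁ T₂) (glueP v₁ v₂ hA₁ hA₂)
  | Sum.inl x => Sum.inl (Sum.inl x)
  | Sum.inr p => Sum.inr ⟨(Sum.inl p.val.1, phi1 v₁ v₂ A₁ A₂ p.val.1 p.val.2),
      phi1_mem v₁ v₂ A₁ A₂ p.property⟩

/-- The inclusion of the second corona into the glued corona. -/
noncomputable def cmap2 (hA₁ : A₁ ∈ P₁.part v₁) (hA₂ : A₂ ∈ P₂.part v₂) :
    CoronaVert T₂ P₂ → CoronaVert (glueT v₁ v₂ T₁ T₂) (glueP v₁ v₂ hA₁ hA₂)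
  | Sum.inl y => Sum.inl (gi2 v₁ v₂ y)
  | Sum.inr p => Sum.inr ⟨(gi2 v₁ v₂ p.val.1, phi2 v₁ v₂ A₁ A₂ p.val.1 p.val.2),
      phi2_mem v₁ v₂ A₁ A₂ p.property⟩

end Cmap

section CmapLemmas
variable {V₁ V₂ : Type} [DecidableEq V₁] [DecidableEq V₂] {v₁ : V₁} {v₂ : V₂}
  {T₁ : SimpleGraph V₁} {T₂ : SimpleGraph V₂} {P₁ : NbhdPartition T₁} {P₂ : NbhdPartition T₂}
  {A₁ : Set V₁} {A₂ : Set V₂}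

lemma merged_ne_inl_image (hA₂ : A₂ ∈ P₂.part v₂) (A : Set V₁) :
    mergedPart v₁ v₂ A₁ A₂ ≠ Sum.inl '' A := by
  intro h
  obtain ⟨b, hb⟩ := P₂.nonempty v₂ A₂ hA₂
  have h1 : gi2 v₁ v₂ b ∈ Sum.inl '' A := h ▸ Or.inr ⟨b, hb, rfl⟩
  obtain ⟨a, -, ha⟩ := h1
  obtain ⟨hb2, -⟩ := eq_of_gi2_eq_inl v₁ v₂ ha.symm
  rw [hb2] at hb
  exact not_mem_self_part P₂ hA₂ hb

lemma merged_ne_gi2_image (hA₁ : A₁ ∈ P₁.part v₁) {B : Set V₂} (hBv : v₂ ∉ B) :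
    mergedPart v₁ v₂ A₁ A₂ ≠ gi2 v₁ v₂ '' B := by
  intro h
  obtain ⟨a, ha⟩ := P₁.nonempty v₁ A₁ hA₁
  have h1 : (Sum.inl a : GlueV V₁ V₂ v₂) ∈ gi2 v₁ v₂ '' B := h ▸ Or.inl ⟨a, ha, rfl⟩
  exact inl_not_mem_gi2_image v₁ v₂ hBv a h1

lemma inl_image_ne_gi2_image {A : Set V₁} {B : Set V₂} (hBv : v₂ ∉ B) (hBne : B.Nonempty) :
    (Sum.inl '' A : Set (GlueV V₁ V₂ v₂)) ≠ gi2 v₁ v₂ '' B := by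
  intro h
  obtain ⟨b, hb⟩ := hBne
  have h1 : gi2 v₁ v₂ b ∈ Sum.inl '' A := h ▸ ⟨b, hb, rfl⟩
  obtain ⟨a, -, ha⟩ := h1
  obtain ⟨hb2, -⟩ := eq_of_gi2_eq_inl v₁ v₂ ha.symm
  rw [hb2] at hb
  exact hBv hb

lemma mem_phi1_inl (hA₂ : A₂ ∈ P₂.part v₂) {x y : V₁} {A : Set V₁} (h : Sum.inl y ∈ phi1 v₁ v₂ A₁ A₂ x A) :
    y ∈ A := by
  by_cases h' : x = v₁ ∧ A = A₁
  · rw [phi1, if_pos h'] at h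
    rcases h with ⟨z, hz, hzy⟩ | h
    · rw [h'.2]
      rwa [← Sum.inl_injective hzy]
    · exact absurd h (inl_not_mem_gi2_image v₁ v₂ (not_mem_self_part P₂ hA₂) y)
  · rw [phi1_neg _ _ _ _ h'] at h
    obtain ⟨z, hz, hzy⟩ := h
    rwa [← Sum.inl_injective hzy]

lemma mem_phi2_gi2 {y y' : V₂} {B : Set V₂} (h : gi2 v₁ v₂ y' ∈ phi2 v₁ v₂ A₁ A₂ y B)
    (hyy : y' = v₂ → y ≠ v₂) : y' ∈ B := by
  by_cases h' : y = v₂ ∧ B = A₂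
  · rw [phi2, if_pos h'] at h
    rcases h with ⟨z, hz, hzy⟩ | ⟨z, hz, hzy⟩
    · obtain ⟨hy2, -⟩ := eq_of_gi2_eq_inl v₁ v₂ hzy.symm
      exact absurd h'.1 (hyy hy2)
    · rw [h'.2]
      rwa [← gi2_injective v₁ v₂ hzy]
  · rw [phi2_neg _ _ _ _ h'] at h
    obtain ⟨z, hz, hzy⟩ := h
    rwa [← gi2_injective v₁ v₂ hzy]

lemma mem_inl_phi2 {x : V₁} {B : Set V₂} (hB : B ∈ P₂.part v₂)
    (h : Sum.inl x ∈ phi2 v₁ v₂ A₁ A₂ v₂ B) : B = A₂ ∧ x ∈ A₁ := by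
  by_cases h' : B = A₂
  · subst h'
    rw [phi2_pos] at h
    rcases h with ⟨z, hz, hzy⟩ | h
    · exact ⟨rfl, by rwa [← Sum.inl_injective hzy]⟩
    · exact absurd h (inl_not_mem_gi2_image v₁ v₂ (not_mem_self_part P₂ hB) x)
  · rw [phi2_neg _ _ _ _ (fun hc => h' hc.2)] at h
    exact absurd h (inl_not_mem_gi2_image v₁ v₂ (not_mem_self_part P₂ hB) x)

lemma mem_gi2_phi1 {y : V₂} {A : Set V₁} (hy : y ≠ v₂)
    (h : gi2 v₁ v₂ y ∈ phi1 v₁ v₂ A₁ A₂ v₁ A) : A = A₁ ∧ y ∈ A₂ := by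
  by_cases h' : A = A₁
  · subst h'
    rw [phi1_pos] at h
    rcases h with ⟨z, hz, hzy⟩ | ⟨z, hz, hzy⟩
    · obtain ⟨hy2, -⟩ := eq_of_gi2_eq_inl v₁ v₂ hzy.symm
      exact absurd hy2 hy
    · exact ⟨rfl, by rwa [← gi2_injective v₁ v₂ hzy]⟩
  · rw [phi1_neg _ _ _ _ (fun hc => h' hc.2)] at h
    obtain ⟨z, hz, hzy⟩ := h
    obtain ⟨hy2, -⟩ := eq_of_gi2_eq_inl v₁ v₂ hzy.symm
    exact absurd hy2 hy

lemma phi1_inj (hA₁ : A₁ ∈ P₁.part v₁) (hA₂ : A₂ ∈ P₂.part v₂) {x : V₁} {A A' : Set V₁} (h : phi1 v₁ v₂ A₁ A₂ x A = phi1 v₁ v₂ A₁ A₂ x A') :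
    A = A' := by
  by_cases h1 : x = v₁ ∧ A = A₁ <;> by_cases h2 : x = v₁ ∧ A' = A₁
  · rw [h1.2, h2.2]
  · rw [phi1, if_pos h1, phi1_neg _ _ _ _ h2] at h
    exact absurd h (merged_ne_inl_image hA₂ A')
  · rw [phi1, phi1, if_pos h2, if_neg h1] at h
    exact absurd h.symm (merged_ne_inl_image hA₂ A)
  · rw [phi1_neg _ _ _ _ h1, phi1_neg _ _ _ _ h2] at h
    exact Function.Injective.image_injective Sum.inl_injective h

lemma phi2_inj (hA₁ : A₁ ∈ P₁.part v₁) (hA₂ : A₂ ∈ P₂.part v₂) {y : V₂} {B B' : Set V₂} (hB : B ∈ P₂.part y) (hB' : B' ∈ P₂.part y)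
    (h : phi2 v₁ v₂ A₁ A₂ y B = phi2 v₁ v₂ A₁ A₂ y B') : B = B' := by
  by_cases h1 : y = v₂ ∧ B = A₂ <;> by_cases h2 : y = v₂ ∧ B' = A₂
  · rw [h1.2, h2.2]
  · rw [phi2, if_pos h1, phi2_neg _ _ _ _ h2] at h
    exact absurd h (merged_ne_gi2_image hA₁
      (not_mem_self_part P₂ (h1.1 ▸ hB')))
  · rw [phi2, phi2, if_pos h2, if_neg h1] at h
    exact absurd h.symm (merged_ne_gi2_image hA₁
      (not_mem_self_part P₂ (h2.1 ▸ hB)))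
  · rw [phi2_neg _ _ _ _ h1, phi2_neg _ _ _ _ h2] at h
    exact Function.Injective.image_injective (gi2_injective v₁ v₂) h

lemma cmap1_inj (hA₁ : A₁ ∈ P₁.part v₁) (hA₂ : A₂ ∈ P₂.part v₂) : Function.Injective (cmap1 v₁ v₂ A₁ A₂ hA₁ hA₂) := by
  rintro (x | ⟨⟨x, A⟩, hx⟩) (y | ⟨⟨y, B⟩, hy⟩) h <;> simp only [cmap1] at h
  · rw [Sum.inl_injective (Sum.inl_injective h)]
  · exact absurd h (by simp)
  · exact absurd h (by simp)
  · have h1 := Subtype.ext_iff.mp (Sum.inr_injective h)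
    have h2 : x = y := Sum.inl_injective (congrArg Prod.fst h1)
    subst h2
    have h3 := phi1_inj hA₁ hA₂ (congrArg Prod.snd h1)
    subst h3
    rfl

lemma cmap2_inj (hA₁ : A₁ ∈ P₁.part v₁) (hA₂ : A₂ ∈ P₂.part v₂) : Function.Injective (cmap2 v₁ v₂ A₁ A₂ hA₁ hA₂) := by
  rintro (x | ⟨⟨x, B⟩, hx⟩) (y | ⟨⟨y, B'⟩, hy⟩) h <;> simp only [cmap2] at h
  · rw [gi2_injective v₁ v₂ (Sum.inl_injective h)]
  · exact absurd h (by simp)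
  · exact absurd h (by simp)
  · have h1 := Subtype.ext_iff.mp (Sum.inr_injective h)
    have h2 : x = y := gi2_injective v₁ v₂ (congrArg Prod.fst h1)
    subst h2
    have h3 := phi2_inj hA₁ hA₂ hx hy (congrArg Prod.snd h1)
    subst h3
    rfl

lemma cmap_cross_eq (hA₁ : A₁ ∈ P₁.part v₁) (hA₂ : A₂ ∈ P₂.part v₂) {c : CoronaVert T₁ P₁} {c' : CoronaVert T₂ P₂}
    (h : cmap1 v₁ v₂ A₁ A₂ hA₁ hA₂ c = cmap2 v₁ v₂ A₁ A₂ hA₁ hA₂ c') :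
    c = Sum.inl v₁ ∨ c = Sum.inr ⟨(v₁, A₁), hA₁⟩ := by
  match c, c' with
  | Sum.inl x, Sum.inl y =>
    simp only [cmap1, cmap2] at h
    obtain ⟨-, hxv⟩ := eq_of_gi2_eq_inl v₁ v₂ (Sum.inl_injective h).symm
    exact Or.inl (by rw [hxv])
  | Sum.inl x, Sum.inr q => exact absurd h (by simp [cmap1, cmap2])
  | Sum.inr p, Sum.inl y => exact absurd h (by simp [cmap1, cmap2])
  | Sum.inr ⟨⟨x, A⟩, hx⟩, Sum.inr ⟨⟨y, B⟩, hy⟩ =>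
    simp only [cmap1, cmap2] at h
    have h1 := Subtype.ext_iff.mp (Sum.inr_injective h)
    have h2 : Sum.inl x = gi2 v₁ v₂ y := congrArg Prod.fst h1
    obtain ⟨hy2, hx1⟩ := eq_of_gi2_eq_inl v₁ v₂ h2.symm
    have h3 := congrArg Prod.snd h1
    simp only at h3
    rw [hy2] at hy
    by_cases hAA : A = A₁
    · exact Or.inr (by simp only [Sum.inr.injEq]; exact Subtype.ext (Prod.ext hx1 hAA))
    · rw [phi1_neg _ _ _ _ (fun hc => hAA hc.2)] at h3
      exfalso
      by_cases hBB : B = A₂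
      · rw [hy2, hBB, phi2_pos] at h3
        exact merged_ne_inl_image hA₂ A h3.symm
      · rw [hy2, phi2_neg _ _ _ _ (fun hc => hBB hc.2)] at h3
        exact inl_image_ne_gi2_image (not_mem_self_part P₂ hy)
          (P₂.nonempty _ B hy) h3

lemma cmap_compat0 (hA₁ : A₁ ∈ P₁.part v₁) (hA₂ : A₂ ∈ P₂.part v₂) :
    cmap1 v₁ v₂ A₁ A₂ hA₁ hA₂ (Sum.inl v₁) =
      cmap2 v₁ v₂ A₁ A₂ hA₁ hA₂ (Sum.inl v₂) := by
  simp only [cmap1, cmap2, gi2_v2]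

lemma cmap_compat1 (hA₁ : A₁ ∈ P₁.part v₁) (hA₂ : A₂ ∈ P₂.part v₂) :
    cmap1 v₁ v₂ A₁ A₂ hA₁ hA₂ (Sum.inr ⟨(v₁, A₁), hA₁⟩) =
      cmap2 v₁ v₂ A₁ A₂ hA₁ hA₂ (Sum.inr ⟨(v₂, A₂), hA₂⟩) := by
  simp only [cmap1, cmap2]
  congr 1
  refine Subtype.ext (Prod.ext ?_ ?_) <;> simp only
  · rw [gi2_v2]
  · rw [phi1_pos, phi2_pos]

lemma cmap_surj (hA₁ : A₁ ∈ P₁.part v₁) (hA₂ : A₂ ∈ P₂.part v₂) (c : CoronaVert (glueT v₁ v₂ T₁ T₂) (glueP v₁ v₂ hA₁ hA₂)) :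
    (∃ c₁, cmap1 v₁ v₂ A₁ A₂ hA₁ hA₂ c₁ = c) ∨
      (∃ c₂, cmap2 v₁ v₂ A₁ A₂ hA₁ hA₂ c₂ = c) := by
  match c with
  | Sum.inl (Sum.inl x) => exact Or.inl ⟨Sum.inl x, rfl⟩
  | Sum.inl (Sum.inr y) =>
    refine Or.inr ⟨Sum.inl y.val, ?_⟩
    simp only [cmap2]
    rw [gi2_of_ne _ _ y.prop, Subtype.coe_eta]
  | Sum.inr ⟨⟨Sum.inl x, S⟩, hS⟩ =>
    have hS' : S ∈ gluePartFun v₁ v₂ P₁ P₂ A₁ A₂ (Sum.inl x) := hS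
    simp only [gluePartFun] at hS'
    split_ifs at hS' with hx
    · rcases hS' with (⟨B, hB, rfl⟩ | ⟨B, hB, rfl⟩) | rfl
      · refine Or.inl ⟨Sum.inr ⟨(x, B), hx ▸ hB.1⟩, ?_⟩
        simp only [cmap1]
        congr 1
        exact Subtype.ext (Prod.ext rfl (phi1_neg _ _ _ _ (fun hc => hB.2 hc.2)))
      · refine Or.inr ⟨Sum.inr ⟨(v₂, B), hB.1⟩, ?_⟩
        simp only [cmap2]
        congr 1
        refine Subtype.ext (Prod.ext ?_ ?_) <;> simp only
        · rw [gi2_v2, hx]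
        · exact phi2_neg _ _ _ _ (fun hc => hB.2 hc.2)
      · refine Or.inl ⟨Sum.inr ⟨(v₁, A₁), hA₁⟩, ?_⟩
        simp only [cmap1]
        congr 1
        refine Subtype.ext (Prod.ext ?_ ?_) <;> simp only
        · rw [hx]
        · exact phi1_pos _ _ _ _
    · obtain ⟨B, hB, rfl⟩ := hS'
      refine Or.inl ⟨Sum.inr ⟨(x, B), hB⟩, ?_⟩
      simp only [cmap1]
      congr 1
      exact Subtype.ext (Prod.ext rfl (phi1_neg _ _ _ _ (fun hc => hx hc.1)))
  | Sum.inr ⟨⟨Sum.inr y, S⟩, hS⟩ =>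
    have hS' : S ∈ gluePartFun v₁ v₂ P₁ P₂ A₁ A₂ (Sum.inr y) := hS
    obtain ⟨B, hB, rfl⟩ := hS'
    refine Or.inr ⟨Sum.inr ⟨(y.val, B), hB⟩, ?_⟩
    simp only [cmap2]
    congr 1
    refine Subtype.ext (Prod.ext ?_ ?_) <;> simp only
    · rw [gi2_of_ne _ _ y.prop, Subtype.coe_eta]
    · exact phi2_neg _ _ _ _ (fun hc => y.prop hc.1)

lemma inl_subset_phi1 {x : V₁} {A : Set V₁} :
    Sum.inl '' A ⊆ phi1 v₁ v₂ A₁ A₂ x A := by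
  by_cases h : x = v₁ ∧ A = A₁
  · rw [phi1, if_pos h, h.2]
    exact Set.subset_union_left
  · rw [phi1_neg _ _ _ _ h]

lemma gi2_subset_phi2 {y : V₂} {B : Set V₂} :
    gi2 v₁ v₂ '' B ⊆ phi2 v₁ v₂ A₁ A₂ y B := by
  by_cases h : y = v₂ ∧ B = A₂
  · rw [phi2, if_pos h, h.2]
    exact Set.subset_union_right
  · rw [phi2_neg _ _ _ _ h]

lemma cmap1_fwd (hA₁ : A₁ ∈ P₁.part v₁) (hA₂ : A₂ ∈ P₂.part v₂) {c c' : CoronaVert T₁ P₁} (h : (corona T₁ P₁).Adj c c') :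
    (corona (glueT v₁ v₂ T₁ T₂) (glueP v₁ v₂ hA₁ hA₂)).Adj
      (cmap1 v₁ v₂ A₁ A₂ hA₁ hA₂ c) (cmap1 v₁ v₂ A₁ A₂ hA₁ hA₂ c') := by
  match c, c' with
  | Sum.inl x, Sum.inl y => exact absurd h corona_adj_inl_inl
  | Sum.inl x, Sum.inr q =>
    rw [corona_adj_inl_inr] at h
    simp only [cmap1]
    rw [corona_adj_inl_inr]
    exact congrArg Sum.inl h
  | Sum.inr p, Sum.inl x =>
    rw [corona_adj_inr_inl] at h
    simp only [cmap1]
    rw [corona_adj_inr_inl]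
    exact congrArg Sum.inl h
  | Sum.inr p, Sum.inr q =>
    rw [corona_adj_inr_inr] at h
    simp only [cmap1]
    rw [corona_adj_inr_inr]
    exact ⟨glueT_adj_inl v₁ v₂ T₁ T₂ h.1,
      inl_subset_phi1 ⟨q.val.1, h.2.1, rfl⟩,
      inl_subset_phi1 ⟨p.val.1, h.2.2, rfl⟩⟩

lemma cmap2_fwd (hA₁ : A₁ ∈ P₁.part v₁) (hA₂ : A₂ ∈ P₂.part v₂) {c c' : CoronaVert T₂ P₂} (h : (corona T₂ P₂).Adj c c') :
    (corona (glueT v₁ v₂ T₁ T₂) (glueP v₁ v₂ hA₁ hA₂)).Adj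
      (cmap2 v₁ v₂ A₁ A₂ hA₁ hA₂ c) (cmap2 v₁ v₂ A₁ A₂ hA₁ hA₂ c') := by
  match c, c' with
  | Sum.inl x, Sum.inl y => exact absurd h corona_adj_inl_inl
  | Sum.inl x, Sum.inr q =>
    rw [corona_adj_inl_inr] at h
    simp only [cmap2]
    rw [corona_adj_inl_inr]
    exact congrArg (gi2 v₁ v₂) h
  | Sum.inr p, Sum.inl x =>
    rw [corona_adj_inr_inl] at h
    simp only [cmap2]
    rw [corona_adj_inr_inl]
    exact congrArg (gi2 v₁ v₂) h
  | Sum.inr p, Sum.inr q =>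
    rw [corona_adj_inr_inr] at h
    simp only [cmap2]
    rw [corona_adj_inr_inr]
    exact ⟨glueT_adj_gi2 v₁ v₂ T₁ T₂ h.1,
      gi2_subset_phi2 ⟨q.val.1, h.2.1, rfl⟩,
      gi2_subset_phi2 ⟨p.val.1, h.2.2, rfl⟩⟩

lemma cmap1_back (hA₁ : A₁ ∈ P₁.part v₁) (hA₂ : A₂ ∈ P₂.part v₂) {c c' : CoronaVert T₁ P₁}
    (h : (corona (glueT v₁ v₂ T₁ T₂) (glueP v₁ v₂ hA₁ hA₂)).Adj
      (cmap1 v₁ v₂ A₁ A₂ hA₁ hA₂ c) (cmap1 v₁ v₂ A₁ A₂ hA₁ hA₂ c')) :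
    (corona T₁ P₁).Adj c c' := by
  match c, c' with
  | Sum.inl x, Sum.inl y =>
    simp only [cmap1] at h
    exact absurd h corona_adj_inl_inl
  | Sum.inl x, Sum.inr q =>
    simp only [cmap1] at h
    rw [corona_adj_inl_inr] at h
    rw [corona_adj_inl_inr]
    exact Sum.inl_injective h
  | Sum.inr p, Sum.inl x =>
    simp only [cmap1] at h
    rw [corona_adj_inr_inl] at h
    rw [corona_adj_inr_inl]
    exact Sum.inl_injective h
  | Sum.inr p, Sum.inr q =>
    simp only [cmap1] at h
    rw [corona_adj_inr_inr] at h
    obtain ⟨hadj, hm1, hm2⟩ := h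
    rw [corona_adj_inr_inr]
    refine ⟨?_, mem_phi1_inl hA₂ hm1, mem_phi1_inl hA₂ hm2⟩
    rcases (glueT_adj v₁ v₂ T₁ T₂).mp hadj with ⟨x, y, hxy, h1, h2⟩ | ⟨x, y, hxy, h1, h2⟩
    · rwa [Sum.inl_injective h1, Sum.inl_injective h2]
    · obtain ⟨hx, -⟩ := eq_of_gi2_eq_inl v₁ v₂ h1.symm
      obtain ⟨hy, -⟩ := eq_of_gi2_eq_inl v₁ v₂ h2.symm
      rw [hx, hy] at hxy
      exact absurd hxy (T₂.irrefl)
lemma cmap2_back (hA₁ : A₁ ∈ P₁.part v₁) (hA₂ : A₂ ∈ P₂.part v₂) {c c' : CoronaVert T₂ P₂}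
    (h : (corona (glueT v₁ v₂ T₁ T₂) (glueP v₁ v₂ hA₁ hA₂)).Adj
      (cmap2 v₁ v₂ A₁ A₂ hA₁ hA₂ c) (cmap2 v₁ v₂ A₁ A₂ hA₁ hA₂ c')) :
    (corona T₂ P₂).Adj c c' := by
  match c, c' with
  | Sum.inl x, Sum.inl y =>
    simp only [cmap2] at h
    exact absurd h corona_adj_inl_inl
  | Sum.inl x, Sum.inr q =>
    simp only [cmap2] at h
    rw [corona_adj_inl_inr] at h
    rw [corona_adj_inl_inr]
    exact gi2_injective v₁ v₂ h
  | Sum.inr p, Sum.inl x =>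
    simp only [cmap2] at h
    rw [corona_adj_inr_inl] at h
    rw [corona_adj_inr_inl]
    exact gi2_injective v₁ v₂ h
  | Sum.inr p, Sum.inr q =>
    simp only [cmap2] at h
    rw [corona_adj_inr_inr] at h
    obtain ⟨hadj, hm1, hm2⟩ := h
    have hTadj : T₂.Adj p.val.1 q.val.1 := by
      rcases (glueT_adj v₁ v₂ T₁ T₂).mp hadj with ⟨x, y, hxy, h1, h2⟩ | ⟨x, y, hxy, h1, h2⟩
      · obtain ⟨hp1, hx1⟩ := eq_of_gi2_eq_inl v₁ v₂ h1
        obtain ⟨hq1, hy1⟩ := eq_of_gi2_eq_inl v₁ v₂ h2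
        rw [hx1, hy1] at hxy
        exact absurd hxy T₁.irrefl
      · rwa [gi2_injective v₁ v₂ h1, gi2_injective v₁ v₂ h2]
    rw [corona_adj_inr_inr]
    refine ⟨hTadj, ?_, ?_⟩
    · exact mem_phi2_gi2 hm1 (fun hq => by
        rw [hq] at hTadj
        exact fun hp => (hTadj.ne (hp ▸ rfl)).elim)
    · exact mem_phi2_gi2 hm2 (fun hp => by
        rw [hp] at hTadj
        exact fun hq => (hTadj.ne (hq ▸ rfl)).elim)

lemma cmap_cross (hA₁ : A₁ ∈ P₁.part v₁) (hA₂ : A₂ ∈ P₂.part v₂) {c : CoronaVert T₁ P₁} {c' : CoronaVert T₂ P₂}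
    (h : (corona (glueT v₁ v₂ T₁ T₂) (glueP v₁ v₂ hA₁ hA₂)).Adj
      (cmap1 v₁ v₂ A₁ A₂ hA₁ hA₂ c) (cmap2 v₁ v₂ A₁ A₂ hA₁ hA₂ c')) :
    c = Sum.inl v₁ ∨ c = Sum.inr ⟨(v₁, A₁), hA₁⟩ ∨
      c' = Sum.inl v₂ ∨ c' = Sum.inr ⟨(v₂, A₂), hA₂⟩ := by
  match c, c' with
  | Sum.inl x, Sum.inl y =>
    simp only [cmap1, cmap2] at h
    exact absurd h corona_adj_inl_inl
  | Sum.inl x, Sum.inr q =>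
    simp only [cmap1, cmap2] at h
    rw [corona_adj_inl_inr] at h
    obtain ⟨-, hx⟩ := eq_of_gi2_eq_inl v₁ v₂ h.symm
    exact Or.inl (by rw [hx])
  | Sum.inr p, Sum.inl y =>
    simp only [cmap1, cmap2] at h
    rw [corona_adj_inr_inl] at h
    obtain ⟨hy, -⟩ := eq_of_gi2_eq_inl v₁ v₂ h
    exact Or.inr (Or.inr (Or.inl (by rw [hy])))
  | Sum.inr ⟨⟨x, A⟩, hx⟩, Sum.inr ⟨⟨y, B⟩, hy⟩ =>
    simp only [cmap1, cmap2] at h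
    rw [corona_adj_inr_inr] at h
    obtain ⟨hadj, hm1, hm2⟩ := h
    simp only at hadj hm1 hm2
    rcases (glueT_adj v₁ v₂ T₁ T₂).mp hadj with ⟨a, b, hab, h1, h2⟩ | ⟨a, b, hab, h1, h2⟩
    · -- gi2 y = Sum.inl b, so y = v₂
      obtain ⟨hy2, -⟩ := eq_of_gi2_eq_inl v₁ v₂ h2
      rw [hy2] at hm2 hy
      obtain ⟨hB, -⟩ := mem_inl_phi2 hy hm2
      exact Or.inr (Or.inr (Or.inr (by
        congr 1
        exact Subtype.ext (Prod.ext hy2 hB))))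
    · -- Sum.inl x = gi2 a, so a = v₂ and x = v₁
      obtain ⟨ha2, hx1⟩ := eq_of_gi2_eq_inl v₁ v₂ h1.symm
      have hyb : y = b := gi2_injective v₁ v₂ h2
      have hbv : b ≠ v₂ := fun hc => hab.ne (by rw [ha2, hc])
      rw [hx1] at hm1
      obtain ⟨hAA, -⟩ := mem_gi2_phi1 (hyb ▸ hbv) hm1
      exact Or.inr (Or.inl (by
        congr 1
        exact Subtype.ext (Prod.ext hx1 hAA)))

end CmapLemmas

lemma isGeneralCoronaOfTree_of_iso {W K : Type} [Fintype K] {U : SimpleGraph W}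
    (T : SimpleGraph K) (P : NbhdPartition T) (hT : T.IsTree) (f : U ≃g corona T P) :
    IsGeneralCoronaOfTree U := by
  classical
  set n := Fintype.card K with hn
  set e : Fin n ≃ K := (Fintype.equivFin K).symm with he
  set T' : SimpleGraph (Fin n) := T.comap e with hT'
  have φ : T' ≃g T := ⟨e, Iff.rfl⟩
  have hTree' : T'.IsTree := by
    constructor
    · exact (Iso.connected_iff φ).mpr hT.isConnected
    · intro v p hp
      exact hT.IsAcyclic (p.map φ.toHom)
        ((Walk.map_isCycle_iff_of_injective (f := φ.toHom) φ.injective).mpr hp)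
  exact ⟨n, T', P.transport φ.symm, hTree',
    ⟨f.trans (coronaTransportIso φ.symm P)⟩⟩

/-- If the graphs `G = U.induce SG` and `H = U.induce SH` are general coronas
of trees sharing exactly one edge `w0 w1` (and exactly its two endpoints, every edge of
the union `U` lying in `G` or in `H`), where the endpoint `w0` is external in each of `G`
and `H` and the endpoint `w1` is external in neither, then the union `U = G ∪ H` is a
general corona of a tree. -/
theorem union_at_shared_edge {W : Type} [Fintype W]
    (U : SimpleGraph W) (SG SH : Set W) (w0 w1 : W)
    (hw0G : w0 ∈ SG) (hw0H : w0 ∈ SH) (hw1G : w1 ∈ SG) (hw1H : w1 ∈ SH)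
    (hne : w0 ≠ w1) (hadj : U.Adj w0 w1)
    (hcover : SG ∪ SH = Set.univ) (hinter : SG ∩ SH = {w0, w1})
    (hedges : ∀ a b : W, U.Adj a b → (a ∈ SG ∧ b ∈ SG) ∨ (a ∈ SH ∧ b ∈ SH))
    (EG : Set ↥SG) (EH : Set ↥SH)
    (hG : IsGenCoronaWithExt (U.induce SG) EG)
    (hH : IsGenCoronaWithExt (U.induce SH) EH)
    (hmemG : (⟨w0, hw0G⟩ : ↥SG) ∈ EG) (hmemH : (⟨w0, hw0H⟩ : ↥SH) ∈ EH)
    (hnotG : (⟨w1, hw1G⟩ : ↥SG) ∉ EG) (hnotH : (⟨w1, hw1H⟩ : ↥SH) ∉ EH) :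
    IsGeneralCoronaOfTree U := by
  classical
  obtain ⟨n₁, T₁, P₁, hT₁, fG, hEG⟩ := hG
  obtain ⟨n₂, T₂, P₂, hT₂, fH, hEH⟩ := hH
  have hSH : ∀ w : W, w ∉ SG → w ∈ SH := by
    intro w hw
    have hmem : w ∈ SG ∪ SH := hcover ▸ Set.mem_univ w
    exact hmem.resolve_left hw
  have hboth : ∀ w : W, w ∈ SG → w ∈ SH → w = w0 ∨ w = w1 := by
    intro w h1 h2
    have hmem : w ∈ SG ∩ SH := ⟨h1, h2⟩
    rw [hinter] at hmem
    exact hmem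
  rw [hEG] at hmemG hnotG
  rw [hEH] at hmemH hnotH
  obtain ⟨v₁, hv₁⟩ : ∃ y, Sum.inl y = fG ⟨w0, hw0G⟩ := hmemG
  obtain ⟨v₂, hv₂⟩ : ∃ y, Sum.inl y = fH ⟨w0, hw0H⟩ := hmemH
  obtain ⟨q₁, hq₁⟩ : ∃ q, fG ⟨w1, hw1G⟩ = Sum.inr q := by
    rcases hfw1 : fG ⟨w1, hw1G⟩ with x | q
    · exact absurd (show fG ⟨w1, hw1G⟩ ∈ Ext T₁ P₁ from by
        rw [hfw1]; exact ⟨x, rfl⟩) hnotG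
    · exact ⟨q, rfl⟩
  obtain ⟨q₂, hq₂⟩ : ∃ q, fH ⟨w1, hw1H⟩ = Sum.inr q := by
    rcases hfw1 : fH ⟨w1, hw1H⟩ with x | q
    · exact absurd (show fH ⟨w1, hw1H⟩ ∈ Ext T₂ P₂ from by
        rw [hfw1]; exact ⟨x, rfl⟩) hnotH
    · exact ⟨q, rfl⟩
  have hadjG : (U.induce SG).Adj ⟨w0, hw0G⟩ ⟨w1, hw1G⟩ := hadj
  have hadjH : (U.induce SH).Adj ⟨w0, hw0H⟩ ⟨w1, hw1H⟩ := hadj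
  have hcorG : (corona T₁ P₁).Adj (Sum.inl v₁) (Sum.inr q₁) := by
    rw [hv₁, ← hq₁]
    exact fG.map_rel_iff.mpr hadjG
  have hcorH : (corona T₂ P₂).Adj (Sum.inl v₂) (Sum.inr q₂) := by
    rw [hv₂, ← hq₂]
    exact fH.map_rel_iff.mpr hadjH
  have hv1q : v₁ = q₁.val.1 := corona_adj_inl_inr.mp hcorG
  have hv2q : v₂ = q₂.val.1 := corona_adj_inl_inr.mp hcorH
  have hA₁ : q₁.val.2 ∈ P₁.part v₁ := by rw [hv1q]; exact q₁.2
  have hA₂ : q₂.val.2 ∈ P₂.part v₂ := by rw [hv2q]; exact q₂.2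
  have hq₁' : q₁ = ⟨(v₁, q₁.val.2), hA₁⟩ := Subtype.ext (Prod.ext hv1q.symm rfl)
  have hq₂' : q₂ = ⟨(v₂, q₂.val.2), hA₂⟩ := Subtype.ext (Prod.ext hv2q.symm rfl)
  set c1 := cmap1 v₁ v₂ q₁.val.2 q₂.val.2 hA₁ hA₂ with hc1def
  set c2 := cmap2 v₁ v₂ q₁.val.2 q₂.val.2 hA₁ hA₂ with hc2def
  set g : W → CoronaVert (glueT v₁ v₂ T₁ T₂) (glueP v₁ v₂ hA₁ hA₂) :=
    fun w => if h : w ∈ SG then c1 (fG ⟨w, h⟩) else c2 (fH ⟨w, hSH w h⟩) with hgdef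
  have gnormG : ∀ (w : W) (hw : w ∈ SG), g w = c1 (fG ⟨w, hw⟩) := fun w hw => dif_pos hw
  have gnormH : ∀ (w : W) (hw : w ∈ SH), g w = c2 (fH ⟨w, hw⟩) := by
    intro w hw
    by_cases h : w ∈ SG
    · rw [gnormG w h]
      rcases hboth w h hw with h0 | h0
      · have e1 : (⟨w, h⟩ : ↥SG) = ⟨w0, hw0G⟩ := Subtype.ext h0
        have e2 : (⟨w, hw⟩ : ↥SH) = ⟨w0, hw0H⟩ := Subtype.ext h0
        rw [e1, e2, ← hv₁, ← hv₂]
        exact cmap_compat0 hA₁ hA₂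
      · have e1 : (⟨w, h⟩ : ↥SG) = ⟨w1, hw1G⟩ := Subtype.ext h0
        have e2 : (⟨w, hw⟩ : ↥SH) = ⟨w1, hw1H⟩ := Subtype.ext h0
        rw [e1, e2, hq₁, hq₂]
        have hcp := cmap_compat1 hA₁ hA₂
        rw [← hq₁', ← hq₂'] at hcp
        exact hcp
    · exact dif_neg h
  have ginj : Function.Injective g := by
    have hmixed : ∀ a b : W, ∀ (ha : a ∈ SG) (hb : b ∉ SG), g a = g b → a = b := by
      intro a b ha hb hab
      have hbH := hSH b hb
      have hab' := hab
      rw [gnormG a ha, gnormH b hbH] at hab'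
      have haH : a ∈ SH := by
        rcases cmap_cross_eq hA₁ hA₂ hab' with h1 | h1
        · have haw : a = w0 := congrArg Subtype.val (fG.injective (h1.trans hv₁))
          rw [haw]; exact hw0H
        · have he : fG ⟨a, ha⟩ = fG ⟨w1, hw1G⟩ := by rw [h1, ← hq₁', ← hq₁]
          have haw : a = w1 := congrArg Subtype.val (fG.injective he)
          rw [haw]; exact hw1H
      rw [gnormH a haH, gnormH b hbH] at hab
      exact congrArg Subtype.val (fH.injective (cmap2_inj hA₁ hA₂ hab))
    intro a b hab
    by_cases ha : a ∈ SG <;> by_cases hb : b ∈ SG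
    · rw [gnormG a ha, gnormG b hb] at hab
      exact congrArg Subtype.val (fG.injective (cmap1_inj hA₁ hA₂ hab))
    · exact hmixed a b ha hb hab
    · exact (hmixed b a hb ha hab.symm).symm
    · rw [gnormH a (hSH a ha), gnormH b (hSH b hb)] at hab
      exact congrArg Subtype.val (fH.injective (cmap2_inj hA₁ hA₂ hab))
  have gsurj : Function.Surjective g := by
    intro c
    rcases cmap_surj hA₁ hA₂ c with ⟨c₁, hc⟩ | ⟨c₂, hc⟩
    · refine ⟨(fG.symm c₁).val, ?_⟩
      rw [gnormG _ (fG.symm c₁).prop]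
      rw [show (⟨(fG.symm c₁).val, (fG.symm c₁).prop⟩ : ↥SG) = fG.symm c₁ from rfl]
      rw [RelIso.apply_symm_apply]
      exact hc
    · refine ⟨(fH.symm c₂).val, ?_⟩
      rw [gnormH _ (fH.symm c₂).prop]
      rw [show (⟨(fH.symm c₂).val, (fH.symm c₂).prop⟩ : ↥SH) = fH.symm c₂ from rfl]
      rw [RelIso.apply_symm_apply]
      exact hc
  have key : ∀ a b : W, a ∈ SG → b ∉ SG →
      (corona (glueT v₁ v₂ T₁ T₂) (glueP v₁ v₂ hA₁ hA₂)).Adj (g a) (g b) → U.Adj a b := by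
    intro a b ha hb hadj2
    have hbH := hSH b hb
    have hadj' := hadj2
    rw [gnormG a ha, gnormH b hbH] at hadj'
    rcases cmap_cross hA₁ hA₂ hadj' with h1 | h1 | h1 | h1
    · have haw : a = w0 := congrArg Subtype.val (fG.injective (h1.trans hv₁))
      have haH : a ∈ SH := by rw [haw]; exact hw0H
      rw [gnormH a haH, gnormH b hbH] at hadj2
      exact fH.map_rel_iff.mp (cmap2_back hA₁ hA₂ hadj2)
    · have he : fG ⟨a, ha⟩ = fG ⟨w1, hw1G⟩ := by rw [h1, ← hq₁', ← hq₁]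
      have haw : a = w1 := congrArg Subtype.val (fG.injective he)
      have haH : a ∈ SH := by rw [haw]; exact hw1H
      rw [gnormH a haH, gnormH b hbH] at hadj2
      exact fH.map_rel_iff.mp (cmap2_back hA₁ hA₂ hadj2)
    · have hbw : b = w0 := congrArg Subtype.val (fH.injective (h1.trans hv₂))
      exact absurd (by rw [hbw]; exact hw0G) hb
    · have he : fH ⟨b, hbH⟩ = fH ⟨w1, hw1H⟩ := by rw [h1, ← hq₂', ← hq₂]
      have hbw : b = w1 := congrArg Subtype.val (fH.injective he)
      exact absurd (by rw [hbw]; exact hw1G) hb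
  have giff : ∀ a b : W,
      (corona (glueT v₁ v₂ T₁ T₂) (glueP v₁ v₂ hA₁ hA₂)).Adj (g a) (g b) ↔ U.Adj a b := by
    intro a b
    constructor
    · intro h2
      by_cases ha : a ∈ SG <;> by_cases hb : b ∈ SG
      · rw [gnormG a ha, gnormG b hb] at h2
        exact fG.map_rel_iff.mp (cmap1_back hA₁ hA₂ h2)
      · exact key a b ha hb h2
      · exact (key b a hb ha h2.symm).symm
      · rw [gnormH a (hSH a ha), gnormH b (hSH b hb)] at h2
        exact fH.map_rel_iff.mp (cmap2_back hA₁ hA₂ h2)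
    · intro h2
      rcases hedges a b h2 with ⟨ha, hb⟩ | ⟨ha, hb⟩
      · rw [gnormG a ha, gnormG b hb]
        exact cmap1_fwd hA₁ hA₂ (fG.map_rel_iff.mpr h2)
      · rw [gnormH a ha, gnormH b hb]
        exact cmap2_fwd hA₁ hA₂ (fH.map_rel_iff.mpr h2)
  have hiso : U ≃g corona (glueT v₁ v₂ T₁ T₂) (glueP v₁ v₂ hA₁ hA₂) :=
    { toEquiv := Equiv.ofBijective g ⟨ginj, gsurj⟩
      map_rel_iff' := fun {a b} => giff a b }
  exact isGeneralCoronaOfTree_of_iso _ _ (glueT_isTree v₁ v₂ T₁ T₂ hT₁ hT₂) hiso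


end GenCorona
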